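/- For every m ≥ 1 and every e in (ℤ/2ℤ)^m, the quandle Q_m(e) is connected; that is, the subgroup of the symmetric group on Q_m(e) generated by all right translations acts transitively on Q_m(e). -/
import Mathlib


/-- The operation of the magma `Q_m(e)` on `(ℤ/3ℤ) × (ℤ/2ℤ)^m`:
`(i,a)*(j,b) = (-i-j, a)` if `i-j ≡ 0`, `(-i-j, a+b)` if `i-j ≡ 1`, and
`(-i-j, a+b+e)` if `i-j ≡ 2 (mod 3)`. -/
def qop (m : ℕ) (e : Fin m → ZMod 2) (x y : ZMod 3 × (Fin m → ZMod 2)) :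
    ZMod 3 × (Fin m → ZMod 2) :=
  if x.1 - y.1 = 0 then (-x.1 - y.1, x.2)
  else if x.1 - y.1 = 1 then (-x.1 - y.1, x.2 + y.2)
  else (-x.1 - y.1, x.2 + y.2 + e)

private lemma qop_inj (m : ℕ) (e : Fin m → ZMod 2) (x : ZMod 3 × (Fin m → ZMod 2)) :
    Function.Injective (fun y => qop m e y x) := by
  intro y y' h
  simp only [qop] at h
  have h1 : y.1 = y'.1 := by
    have h0 := congrArg Prod.fst h
    split_ifs at h0 <;> simp only at h0 <;> linear_combination -h0
  rw [h1] at h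
  split_ifs at h with hc hd
  · exact Prod.ext h1 (by have := congrArg Prod.snd h; simpa using this)
  · have h2 := congrArg Prod.snd h
    simp only at h2
    exact Prod.ext h1 (by have := add_right_cancel h2; exact this)
  · have h2 := congrArg Prod.snd h
    simp only at h2
    have h3 : y.2 + x.2 = y'.2 + x.2 := add_right_cancel h2
    exact Prod.ext h1 (add_right_cancel h3)

/-- Right translation as a permutation. -/
noncomputable def qperm (m : ℕ) (e : Fin m → ZMod 2) (x : ZMod 3 × (Fin m → ZMod 2)) :
    Equiv.Perm (ZMod 3 × (Fin m → ZMod 2)) :=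
  Equiv.ofBijective _ (Finite.injective_iff_bijective.mp (qop_inj m e x))

private lemma qperm_apply (m : ℕ) (e : Fin m → ZMod 2) (x y : ZMod 3 × (Fin m → ZMod 2)) :
    qperm m e x y = qop m e y x := rfl

/-- For every `m ≥ 1` and every `e ∈ (ℤ/2ℤ)^m`, the quandle `Q_m(e)` is
connected: the subgroup of the symmetric group on `Q_m(e)` generated by all
right translations acts transitively on `Q_m(e)`. -/
theorem qop_connected (m : ℕ) (hm : 1 ≤ m) (e : Fin m → ZMod 2) :
    ∀ a b : ZMod 3 × (Fin m → ZMod 2),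
      ∃ g ∈ Subgroup.closure
          {σ : Equiv.Perm (ZMod 3 × (Fin m → ZMod 2)) |
            ∃ x : ZMod 3 × (Fin m → ZMod 2), ∀ y, σ y = qop m e y x},
        g a = b := by
  intro a b
  set S : Set (Equiv.Perm (ZMod 3 × (Fin m → ZMod 2))) :=
    {σ : Equiv.Perm (ZMod 3 × (Fin m → ZMod 2)) |
      ∃ x : ZMod 3 × (Fin m → ZMod 2), ∀ y, σ y = qop m e y x} with hS
  -- one-step lemma
  have step : ∀ (p : ZMod 3 × (Fin m → ZMod 2)) (c : Fin m → ZMod 2),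
      ∃ g ∈ Subgroup.closure S, g p = (p.1 + 1, c) := by
    intro p c
    refine ⟨qperm m e (p.1 - 1, p.2 + c), Subgroup.subset_closure ⟨_, fun y => rfl⟩, ?_⟩
    rw [qperm_apply]
    have hcond : p.1 - (p.1 - 1) = 1 := sub_sub_cancel p.1 1
    simp only [qop]
    have h10 : (1 : ZMod 3) ≠ 0 := by decide
    rw [if_neg (by rw [hcond]; exact h10), if_pos hcond]
    refine Prod.ext ?_ ?_
    · show -p.1 - (p.1 - 1) = p.1 + 1
      have : ∀ q : ZMod 3, -q - (q - 1) = q + 1 := by decide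
      exact this p.1
    · show p.2 + (p.2 + c) = c
      have h2 : ∀ z : ZMod 2, z + z = 0 := by decide
      rw [← add_assoc]
      have : p.2 + p.2 = 0 := funext fun i => h2 (p.2 i)
      rw [this, zero_add]
  have hall : ∀ d : ZMod 3, d = 0 ∨ d = 1 ∨ d = 2 := by decide
  have hd := hall (b.1 - a.1)
  rcases hd with hd | hd | hd
  · -- three steps
    obtain ⟨g1, hg1, hg1'⟩ := step a 0
    obtain ⟨g2, hg2, hg2'⟩ := step (a.1 + 1, 0) 0
    obtain ⟨g3, hg3, hg3'⟩ := step (a.1 + 1 + 1, 0) b.2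
    refine ⟨g3 * g2 * g1, mul_mem (mul_mem hg3 hg2) hg1, ?_⟩
    have hfst : a.1 + 1 + 1 + 1 = b.1 := by linear_combination (by decide : (3:ZMod 3) = 0) - hd
    simp only [Equiv.Perm.mul_apply, hg1', hg2', hg3']
    exact Prod.ext hfst rfl
  · obtain ⟨g1, hg1, hg1'⟩ := step a b.2
    refine ⟨g1, hg1, ?_⟩
    rw [hg1']
    exact Prod.ext (by linear_combination -hd) rfl
  · obtain ⟨g1, hg1, hg1'⟩ := step a 0
    obtain ⟨g2, hg2, hg2'⟩ := step (a.1 + 1, 0) b.2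
    refine ⟨g2 * g1, mul_mem hg2 hg1, ?_⟩
    simp only [Equiv.Perm.mul_apply, hg1', hg2']
    exact Prod.ext (by linear_combination -hd) rfl
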